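/- Let (Ω, μ) be a probability space, p ≥ 1, and let Y_1, …, Y_p be real random variables each in L²(μ). Set Ȳ = p⁻¹ Σ_{l=1}^p Y_l. Then max_{i,j} |Cov(Y_i, Y_j) − Cov(Y_i − Ȳ, Y_j − Ȳ)| ≤ 3 p⁻¹ max_i Σ_{j=1}^p |Cov(Y_i, Y_j)|. -/

import Mathlib

open MeasureTheory

/-- Covariance of two square-integrable real random variables. -/
noncomputable def cov {Ω : Type*} [MeasurableSpace Ω] (μ : Measure Ω) (U V : Ω → ℝ) : ℝ :=
  ∫ ω, (U ω - ∫ x, U x ∂μ) * (V ω - ∫ x, V x ∂μ) ∂μ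

/-- Proposition 1: `‖Ω₀ − Γ₀‖_max ≤ 3 p⁻¹ ‖Ω₀‖₁`, where `Ω₀` is the covariance matrix
of `(Y_1, …, Y_p)` and `Γ₀` is the covariance matrix of the centered variables `Y_i − Ȳ`. -/
theorem basis_clr_cov_max_bound {Ω : Type*} [MeasurableSpace Ω] (μ : Measure Ω)
    [IsProbabilityMeasure μ] (p : ℕ) (hp : 0 < p) (Y : Fin p → Ω → ℝ)
    (hY : ∀ i, MemLp (Y i) 2 μ) (i j : Fin p) :
    |cov μ (Y i) (Y j) -
        cov μ (fun ω => Y i ω - (∑ l, Y l ω) / p) (fun ω => Y j ω - (∑ l, Y l ω) / p)| ≤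
      3 / p * (Finset.univ.sup' (Finset.univ_nonempty_iff.mpr ⟨⟨0, hp⟩⟩)
        fun i' => ∑ j', |cov μ (Y i') (Y j')|) := by
  classical
  have hpR : (0:ℝ) < p := by exact_mod_cast hp
  set m : Fin p → ℝ := fun k => ∫ x, Y k x ∂μ with hm
  set Z : Fin p → Ω → ℝ := fun k ω => Y k ω - m k with hZdef
  have hZ : ∀ k, MemLp (Z k) 2 μ := fun k => (hY k).sub (memLp_const (m k))
  have hmul : ∀ k l, Integrable (fun ω => Z k ω * Z l ω) μ := by
    intro k l
    have h2 : (1:ENNReal)/1 = 1/2 + 1/2 := by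
      rw [ENNReal.div_add_div_same]; simp [one_add_one_eq_two, ENNReal.div_self]
    have := ((hZ l).smul (hZ k) (p := 2) (q := 2) (r := 1)).integrable le_rfl
    exact this
  set c : Fin p → Fin p → ℝ := fun k l => ∫ ω, Z k ω * Z l ω ∂μ with hc
  have hcov : ∀ k l, cov μ (Y k) (Y l) = c k l := fun k l => rfl
  have hcsymm : ∀ k l, c k l = c l k := by
    intro k l; simp only [hc, mul_comm]
  -- integrability of each Y and of the average
  have hYint : ∀ k, Integrable (Y k) μ := fun k => (hY k).integrable one_le_two
  set B : Ω → ℝ := fun ω => (∑ l, Z l ω) / p with hB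
  have hBint : Integrable B μ := (integrable_finset_sum _ fun l _ =>
    ((hZ l).integrable one_le_two)).div_const _
  -- mean of Y i - S
  have hSint : Integrable (fun ω => (∑ l, Y l ω) / p) μ :=
    (integrable_finset_sum _ fun l _ => hYint l).div_const _
  have hmean : ∀ k, (∫ x, (Y k x - (∑ l, Y l x) / p) ∂μ) = m k - (∑ l, m l) / p := by
    intro k
    rw [integral_sub (hYint k) hSint, integral_div, integral_finset_sum _
      (fun l _ => hYint l)]
  -- the centered version of Y k - S is Z k - B
  have hcenter : ∀ k, (fun ω => Y k ω - (∑ l, Y l ω) / p -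
      ∫ x, (Y k x - (∑ l, Y l x) / p) ∂μ) = fun ω => Z k ω - B ω := by
    intro k
    funext ω
    rw [hmean k]
    simp only [hZdef, hB, Finset.sum_sub_distrib, sub_div]
    ring
  -- key expansion of the second covariance
  have hmulsum1 : ∀ k, Integrable (fun ω => (∑ l, Z k ω * Z l ω) / p) μ :=
    fun k => (integrable_finset_sum _ fun l _ => hmul k l).div_const _
  have hmulsum2 : ∀ k, Integrable (fun ω => (∑ l, Z l ω * Z k ω) / p) μ :=
    fun k => (integrable_finset_sum _ fun l _ => hmul l k).div_const _
  have hmulsum3 : Integrable (fun ω => (∑ k, ∑ l, Z k ω * Z l ω) / p ^ 2) μ :=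
    (integrable_finset_sum _ fun k _ =>
      integrable_finset_sum _ fun l _ => hmul k l).div_const _
  have hexpand : (fun ω => (Z i ω - B ω) * (Z j ω - B ω)) =
      fun ω => Z i ω * Z j ω - (∑ l, Z i ω * Z l ω) / p - (∑ l, Z l ω * Z j ω) / p
        + (∑ k, ∑ l, Z k ω * Z l ω) / p ^ 2 := by
    funext ω
    simp only [hB]
    rw [show (∑ k, ∑ l, Z k ω * Z l ω) = (∑ k, Z k ω) * (∑ l, Z l ω) from
      (Finset.sum_mul_sum _ _ _ _).symm, ← Finset.mul_sum, ← Finset.sum_mul]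
    field_simp
    ring
  have key : cov μ (fun ω => Y i ω - (∑ l, Y l ω) / p)
      (fun ω => Y j ω - (∑ l, Y l ω) / p) =
      c i j - (∑ l, c i l) / p - (∑ l, c l j) / p + (∑ k, ∑ l, c k l) / p ^ 2 := by
    have : cov μ (fun ω => Y i ω - (∑ l, Y l ω) / p)
        (fun ω => Y j ω - (∑ l, Y l ω) / p) =
        ∫ ω, (Z i ω - B ω) * (Z j ω - B ω) ∂μ := by
      unfold cov
      congr 1
      funext ω
      rw [← congrFun (hcenter i) ω, ← congrFun (hcenter j) ω]
    have h12 : Integrable (fun ω => Z i ω * Z j ω - (∑ l, Z i ω * Z l ω) / p) μ :=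
      (hmul i j).sub (hmulsum1 i)
    have h123 : Integrable (fun ω => Z i ω * Z j ω - (∑ l, Z i ω * Z l ω) / p
        - (∑ l, Z l ω * Z j ω) / p) μ := h12.sub (hmulsum2 j)
    have I1 : (∫ ω, (∑ l, Z i ω * Z l ω) / p ∂μ) = (∑ l, c i l) / p := by
      rw [integral_div, integral_finset_sum _ fun l _ => hmul i l]
    have I2 : (∫ ω, (∑ l, Z l ω * Z j ω) / p ∂μ) = (∑ l, c l j) / p := by
      rw [integral_div, integral_finset_sum _ fun l _ => hmul l j]
    have I3 : (∫ ω, (∑ k, ∑ l, Z k ω * Z l ω) / p ^ 2 ∂μ)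
        = (∑ k, ∑ l, c k l) / p ^ 2 := by
      rw [integral_div, integral_finset_sum _ fun k _ =>
        integrable_finset_sum _ fun l _ => hmul k l]
      congr 1
      exact Finset.sum_congr rfl fun k _ => integral_finset_sum _ fun l _ => hmul k l
    rw [this, hexpand, integral_add h123 hmulsum3, integral_sub h12 (hmulsum2 j),
      integral_sub (hmul i j) (hmulsum1 i), I1, I2, I3]
  -- the difference
  have hdiff : cov μ (Y i) (Y j) -
      cov μ (fun ω => Y i ω - (∑ l, Y l ω) / p) (fun ω => Y j ω - (∑ l, Y l ω) / p) =
      (∑ l, c i l) / p + (∑ l, c l j) / p - (∑ k, ∑ l, c k l) / p ^ 2 := by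
    rw [hcov i j, key]; ring
  set M : ℝ := Finset.univ.sup' (Finset.univ_nonempty_iff.mpr ⟨⟨0, hp⟩⟩)
    (fun i' => ∑ j', |cov μ (Y i') (Y j')|) with hM
  have hMle : ∀ k, (∑ l, |c k l|) ≤ M := by
    intro k
    exact Finset.le_sup' (fun i' => ∑ j', |cov μ (Y i') (Y j')|) (Finset.mem_univ k)
  have hbound1 : |(∑ l, c i l) / p| ≤ M / p := by
    rw [abs_div, abs_of_pos hpR]
    exact div_le_div_of_nonneg_right ((Finset.abs_sum_le_sum_abs _ _).trans (hMle i)) hpR.le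
  have hbound2 : |(∑ l, c l j) / p| ≤ M / p := by
    rw [abs_div, abs_of_pos hpR]
    apply div_le_div_of_nonneg_right _ hpR.le
    calc |∑ l, c l j| ≤ ∑ l, |c l j| := Finset.abs_sum_le_sum_abs _ _
      _ = ∑ l, |c j l| := by simp_rw [fun l => hcsymm l j]
      _ ≤ M := hMle j
  have hbound3 : |(∑ k, ∑ l, c k l) / p ^ 2| ≤ M / p := by
    rw [abs_div, abs_of_pos (pow_pos hpR 2), div_le_div_iff₀ (pow_pos hpR 2) hpR]
    calc |∑ k, ∑ l, c k l| * p ≤ (∑ k, ∑ l, |c k l|) * p := by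
          apply mul_le_mul_of_nonneg_right _ hpR.le
          exact (Finset.abs_sum_le_sum_abs _ _).trans
            (Finset.sum_le_sum fun k _ => Finset.abs_sum_le_sum_abs _ _)
      _ ≤ (∑ _k : Fin p, M) * p := by
          apply mul_le_mul_of_nonneg_right (Finset.sum_le_sum fun k _ => hMle k) hpR.le
      _ = M * p ^ 2 := by
          rw [Finset.sum_const, Finset.card_univ, Fintype.card_fin, nsmul_eq_mul]
          ring
  calc |cov μ (Y i) (Y j) -
        cov μ (fun ω => Y i ω - (∑ l, Y l ω) / p) (fun ω => Y j ω - (∑ l, Y l ω) / p)|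
      = |(∑ l, c i l) / p + (∑ l, c l j) / p - (∑ k, ∑ l, c k l) / p ^ 2| := by rw [hdiff]
    _ ≤ |(∑ l, c i l) / p| + |(∑ l, c l j) / p| + |(∑ k, ∑ l, c k l) / p ^ 2| := by
        apply (abs_sub _ _).trans
        gcongr
        exact abs_add_le _ _
    _ ≤ M / p + M / p + M / p := by gcongr
    _ = 3 / p * M := by ring
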